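/- Let f : ℝⁿ → ℝ be differentiable and convex, and suppose f(y_i) ≤ f(x_i) − ‖∇f(x_i)‖²/(2L) for all i. Then for k ≥ 1 the change in the upper bound U_i = f(y_i) satisfies A_kU_k − A_{k−1}U_{k−1} ≤ −(A_k/(2L))‖∇f(x_k)‖² + A_{k−1}⟨∇f(x_k), x_k − y_{k−1}⟩ + a_kf(x_k). -/
import Mathlib


open RealInnerProductSpace Finset

/-- **Change in the upper bound.** If `f` is convex and differentiable and
`f (y i) ≤ f (x i) - ‖∇f(x i)‖²/(2L)` for all `i`, then for `k ≥ 1`, with `U_i = f (y i)`,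
`A_k U_k - A_{k-1} U_{k-1} ≤ -(A_k/(2L)) ‖∇f(x_k)‖²
 + A_{k-1} ⟪∇f(x_k), x_k - y_{k-1}⟫ + a_k f(x_k)`. -/
theorem upper_bound_change {n : ℕ} (f : EuclideanSpace ℝ (Fin n) → ℝ) (L : ℝ)
    (hL : 0 < L)
    (hdiff : Differentiable ℝ f)
    (hconv : ∀ x y : EuclideanSpace ℝ (Fin n),
      f y ≥ f x + ⟪gradient f x, y - x⟫)
    (a A : ℕ → ℝ) (ha : ∀ i, 0 < a i)
    (hA : ∀ i, A i = ∑ j ∈ Finset.range (i + 1), a j)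
    (x y : ℕ → EuclideanSpace ℝ (Fin n))
    (hy : ∀ i, f (y i) ≤ f (x i) - 1 / (2 * L) * ‖gradient f (x i)‖ ^ 2)
    (k : ℕ) (hk : 1 ≤ k) :
    A k * f (y k) - A (k - 1) * f (y (k - 1)) ≤
      -(A k / (2 * L)) * ‖gradient f (x k)‖ ^ 2
      + A (k - 1) * ⟪gradient f (x k), x k - y (k - 1)⟫ + a k * f (x k) := by
  have hA1 : 0 ≤ A (k - 1) := by
    rw [hA]
    exact Finset.sum_nonneg fun j _ => (ha j).le
  have hAk : A k = A (k - 1) + a k := by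
    rw [hA, hA, Nat.sub_add_cancel hk, Finset.sum_range_succ]
  have hAk0 : 0 ≤ A k := by rw [hAk]; linarith [ha k]
  have hc := hconv (x k) (y (k - 1))
  have hi : ⟪gradient f (x k), x k - y (k - 1)⟫ =
      -⟪gradient f (x k), y (k - 1) - x k⟫ := by
    rw [← inner_neg_right]; congr 1; abel
  have hyk := hy k
  rw [hi]
  have h1 := mul_le_mul_of_nonneg_left hyk hAk0
  have h2 := mul_le_mul_of_nonneg_left hc.le hA1
  rw [hAk] at h1 ⊢
  have hL2 : (0:ℝ) < 2 * L := by linarith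
  rw [div_eq_mul_inv, ← one_div] at *
  nlinarith [h1, h2, hL2]
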